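/- (Toda-type identity.) For every n ≥ 1 and every ω ∈ ℝ, the Hankel determinants satisfy h_n''(ω) h_n(ω) − (h_n'(ω))² = − h_{n−1}(ω) h_{n+1}(ω), where primes denote derivatives with respect to ω. -/

import Mathlib

open MeasureTheory

/-- Moments of the oscillatory weight `e^{iωx}` on `[-1,1]`. -/
noncomputable def mu (ω : ℝ) (n : ℕ) : ℂ :=
  ∫ x : ℝ in (-1 : ℝ)..1, (x : ℂ) ^ n * Complex.exp (Complex.I * ω * x)

/-- The `(n+1) × (n+1)` Hankel determinant of the moments. -/
noncomputable def hankel (n : ℕ) (ω : ℝ) : ℂ :=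
  Matrix.det (Matrix.of fun j k : Fin (n + 1) => mu ω ((j : ℕ) + (k : ℕ)))



lemma hasDerivAt_mu (m : ℕ) (ω : ℝ) :
    HasDerivAt (fun w : ℝ => mu w m) (Complex.I * mu ω (m + 1)) ω := by
  have key : ∀ (x : ℝ) (t : ℝ), HasDerivAt
      (fun w : ℝ => (t : ℂ) ^ m * Complex.exp (Complex.I * (w : ℂ) * t))
      (Complex.I * ((t : ℂ) ^ (m+1) * Complex.exp (Complex.I * (x : ℂ) * t))) x := by
    intro x t
    have h1 : HasDerivAt (fun w : ℝ => (Complex.I * (w : ℂ) * t : ℂ)) (Complex.I * t) x := by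
      simpa using ((Complex.ofRealCLM.hasDerivAt (x := x)).const_mul Complex.I).mul_const (t : ℂ)
    have := (h1.cexp).const_mul ((t : ℂ) ^ m)
    exact this.congr_deriv (by ring)
  have main := intervalIntegral.hasDerivAt_integral_of_dominated_loc_of_deriv_le
      (𝕜 := ℝ)
      (F := fun (w : ℝ) (t : ℝ) => (t : ℂ) ^ m * Complex.exp (Complex.I * (w : ℂ) * t))
      (F' := fun (w : ℝ) (t : ℝ) => Complex.I * ((t : ℂ) ^ (m+1) * Complex.exp (Complex.I * (w : ℂ) * t)))
      (x₀ := ω) (a := (-1:ℝ)) (b := 1) (μ := MeasureTheory.volume) (bound := fun _ => 1)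
      (s := Metric.ball ω 1) (Metric.ball_mem_nhds ω one_pos) ?_ ?_ ?_ ?_ ?_ ?_
  · have h2 := main.2
    rw [show (mu ω (m+1)) = ∫ t : ℝ in (-1:ℝ)..1, (t : ℂ) ^ (m+1) * Complex.exp (Complex.I * ω * t) from rfl]
    rw [← intervalIntegral.integral_const_mul]
    exact h2
  · filter_upwards with x
    apply Continuous.aestronglyMeasurable
    fun_prop
  · apply Continuous.intervalIntegrable
    fun_prop
  · apply Continuous.aestronglyMeasurable
    fun_prop
  · filter_upwards with t ht x _
    have habs : |t| ≤ 1 := by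
      rw [Set.uIoc_of_le (by norm_num)] at ht
      rw [abs_le]; constructor <;> [linarith [ht.1]; linarith [ht.2]]
    rw [norm_mul, norm_mul]
    have h3 : ‖Complex.exp (Complex.I * (x : ℂ) * t)‖ = 1 := by
      rw [Complex.norm_exp]
      norm_num [Complex.mul_re, Complex.I_re, Complex.I_im, Complex.ofReal_re, Complex.ofReal_im]
    rw [h3, Complex.norm_I, one_mul, mul_one, norm_pow, Complex.norm_real, Real.norm_eq_abs]
    exact pow_le_one₀ (abs_nonneg t) habs
  · exact intervalIntegrable_const
  · filter_upwards with t _ x _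
    exact key x t

open Matrix

lemma toda_hasDerivAt_det {m : ℕ} (M : Fin m → Fin m → ℝ → ℂ) (M' : Fin m → Fin m → ℂ) (ω : ℝ)
    (h : ∀ j k, HasDerivAt (M j k) (M' j k) ω) :
    HasDerivAt (fun w => Matrix.det (Matrix.of fun j k => M j k w))
      (∑ j, Matrix.det (Matrix.updateRow (Matrix.of fun j' k => M j' k ω) j (fun k => M' j k))) ω := by
  have hL : (fun w => Matrix.det (Matrix.of fun j k => M j k w)) =
      fun w => ∑ σ : Equiv.Perm (Fin m), (Equiv.Perm.sign σ : ℂ) * ∏ i, M (σ i) i w := by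
    funext w; rw [Matrix.det_apply']; rfl
  rw [hL]
  have hterm : ∀ σ : Equiv.Perm (Fin m), HasDerivAt
      (fun w => (Equiv.Perm.sign σ : ℂ) * ∏ i, M (σ i) i w)
      ((Equiv.Perm.sign σ : ℂ) * ∑ i, (∏ j ∈ Finset.univ.erase i, M (σ j) j ω) * M' (σ i) i) ω := by
    intro σ
    have := (HasDerivAt.finset_prod (u := Finset.univ) (f := fun i w => M (σ i) i w)
      (f' := fun i => M' (σ i) i) (fun i _ => h (σ i) i)).const_mul ((Equiv.Perm.sign σ : ℂ))
    simpa [smul_eq_mul] using this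
  have := HasDerivAt.sum (u := Finset.univ) (fun σ _ => hterm σ)
  rw [Finset.sum_fn] at this
  refine this.congr_deriv (Eq.symm ?_)
  have hdet : ∀ r : Fin m, ((Matrix.of fun j' k => M j' k ω).updateRow r fun k => M' r k).det
      = ∑ σ : Equiv.Perm (Fin m), (Equiv.Perm.sign σ : ℂ) *
          (M' r (σ⁻¹ r) * ∏ i ∈ Finset.univ.erase (σ⁻¹ r), M (σ i) i ω) := by
    intro r
    rw [Matrix.det_apply']
    refine Finset.sum_congr rfl fun σ _ => ?_
    congr 1
    rw [← Finset.mul_prod_erase _ _ (Finset.mem_univ (σ⁻¹ r))]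
    congr 1
    · simp [Matrix.updateRow_apply, Equiv.Perm.coe_inv, Equiv.apply_symm_apply]
    · refine Finset.prod_congr rfl fun i hi => ?_
      have hne : σ i ≠ r := by
        intro hc
        exact (Finset.mem_erase.mp hi).1 (by rw [← hc, Equiv.Perm.coe_inv, Equiv.symm_apply_apply])
      simp [Matrix.updateRow_apply, hne]
  rw [Finset.sum_congr rfl (fun r _ => hdet r), Finset.sum_comm]
  refine Finset.sum_congr rfl fun σ _ => ?_
  rw [Finset.mul_sum, ← Equiv.sum_comp σ (fun r => (Equiv.Perm.sign σ : ℂ) *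
      (M' r (σ⁻¹ r) * ∏ i ∈ Finset.univ.erase (σ⁻¹ r), M (σ i) i ω))]
  refine Finset.sum_congr rfl fun i _ => ?_
  rw [Equiv.Perm.coe_inv, Equiv.symm_apply_apply]
  ring

open Matrix

variable {R : Type*} [CommRing R] {m : ℕ}

def TodaI0 (m : ℕ) : Fin (m+2) := ⟨m, by omega⟩
def TodaI1 (m : ℕ) : Fin (m+2) := ⟨m+1, by omega⟩

lemma toda_key1 (A : Matrix (Fin (m+2)) (Fin (m+2)) R) :
    A.det * (adjugate A (TodaI0 m) (TodaI0 m) * adjugate A (TodaI1 m) (TodaI1 m)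
      - adjugate A (TodaI0 m) (TodaI1 m) * adjugate A (TodaI1 m) (TodaI0 m))
    = A.det * (A.det * (A.submatrix (Fin.castAdd 2) (Fin.castAdd 2)).det) := by
  classical
  have h10 : TodaI1 m ≠ TodaI0 m := by simp [TodaI0, TodaI1, Fin.ext_iff]
  have hc0 : ∀ j : Fin m, Fin.castAdd 2 j ≠ TodaI0 m := by
    intro j h
    have := Fin.ext_iff.mp h
    simp [TodaI0] at this; omega
  have hc1 : ∀ j : Fin m, Fin.castAdd 2 j ≠ TodaI1 m := by
    intro j h
    have := Fin.ext_iff.mp h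
    simp [TodaI1] at this; omega
  have hn0 : Fin.natAdd m (0 : Fin 2) = TodaI0 m := by simp [TodaI0, Fin.ext_iff]
  have hn1 : Fin.natAdd m (1 : Fin 2) = TodaI1 m := by simp [TodaI1, Fin.ext_iff]
  have hnat0 : ∀ j : Fin 2, (j : ℕ) = 0 → Fin.natAdd m j = TodaI0 m := by
    intro j hj; simp [TodaI0, Fin.ext_iff, hj]
  have hnat1 : ∀ j : Fin 2, (j : ℕ) = 1 → Fin.natAdd m j = TodaI1 m := by
    intro j hj; simp [TodaI1, Fin.ext_iff, hj]
  set B : Matrix (Fin (m+2)) (Fin (m+2)) R := Matrix.of fun i j =>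
    if j = TodaI0 m then adjugate A i (TodaI0 m) else if j = TodaI1 m then adjugate A i (TodaI1 m)
    else (1 : Matrix (Fin (m+2)) (Fin (m+2)) R) i j with hB
  have hAB : A * B = Matrix.of fun i j =>
      if j = TodaI0 m then A.det * (1 : Matrix (Fin (m+2)) (Fin (m+2)) R) i (TodaI0 m)
      else if j = TodaI1 m then A.det * (1 : Matrix (Fin (m+2)) (Fin (m+2)) R) i (TodaI1 m)
      else A i j := by
    ext i j
    rw [Matrix.mul_apply]
    by_cases h0 : j = TodaI0 m
    · subst h0
      have : ∑ k, A i k * B k (TodaI0 m) = (A * adjugate A) i (TodaI0 m) := by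
        rw [Matrix.mul_apply]
        refine Finset.sum_congr rfl fun k _ => ?_
        simp [hB]
      rw [this, Matrix.mul_adjugate]
      simp
    · by_cases h1 : j = TodaI1 m
      · subst h1
        have : ∑ k, A i k * B k (TodaI1 m) = (A * adjugate A) i (TodaI1 m) := by
          rw [Matrix.mul_apply]
          refine Finset.sum_congr rfl fun k _ => ?_
          simp [hB, h10]
        rw [this, Matrix.mul_adjugate]
        simp [h10]
      · simp only [Matrix.of_apply, if_neg h0, if_neg h1]
        have : ∑ k, A i k * B k j = ∑ k, A i k * (1 : Matrix (Fin (m+2)) (Fin (m+2)) R) k j := by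
          refine Finset.sum_congr rfl fun k _ => ?_
          simp [hB, h0, h1]
        rw [this, ← Matrix.mul_apply, Matrix.mul_one]
  have hBblock : B.submatrix finSumFinEquiv finSumFinEquiv =
      fromBlocks 1 (Matrix.of fun i j => B (Fin.castAdd 2 i) (Fin.natAdd m j)) 0
        (Matrix.of fun i j => B (Fin.natAdd m i) (Fin.natAdd m j)) := by
    ext i j
    cases i with
    | inl i =>
      cases j with
      | inl j =>
        simp only [submatrix_apply, finSumFinEquiv_apply_left, fromBlocks_apply₁₁, hB,
          Matrix.of_apply]
        rw [if_neg (hc0 j), if_neg (hc1 j)]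
        simp [Matrix.one_apply, Fin.ext_iff]
      | inr j => simp [submatrix_apply, finSumFinEquiv_apply_left, finSumFinEquiv_apply_right]
    | inr i =>
      cases j with
      | inl j =>
        simp only [submatrix_apply, finSumFinEquiv_apply_left, finSumFinEquiv_apply_right,
          fromBlocks_apply₂₁, Matrix.zero_apply]
        have : (Fin.natAdd m i : Fin (m+2)) ≠ Fin.castAdd 2 j := by
          simp [Fin.ext_iff]; omega
        simp [hB, hc0 j, hc1 j, Matrix.one_apply, this]
      | inr j => simp [submatrix_apply, finSumFinEquiv_apply_right]
  have hdetB : B.det = adjugate A (TodaI0 m) (TodaI0 m) * adjugate A (TodaI1 m) (TodaI1 m)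
      - adjugate A (TodaI0 m) (TodaI1 m) * adjugate A (TodaI1 m) (TodaI0 m) := by
    rw [← det_submatrix_equiv_self finSumFinEquiv, hBblock, det_fromBlocks_zero₂₁, det_one,
      one_mul, det_fin_two]
    simp [hn0, hn1, hB, h10]
  have hCblock : (A * B).submatrix finSumFinEquiv finSumFinEquiv =
      fromBlocks (A.submatrix (Fin.castAdd 2) (Fin.castAdd 2)) 0
        (Matrix.of fun i j => A (Fin.natAdd m i) (Fin.castAdd 2 j))
        (A.det • (1 : Matrix (Fin 2) (Fin 2) R)) := by
    rw [hAB]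
    ext i j
    cases i with
    | inl i =>
      cases j with
      | inl j =>
        simp [hc0 j, hc1 j]
      | inr j =>
        simp only [submatrix_apply, finSumFinEquiv_apply_left, finSumFinEquiv_apply_right,
          fromBlocks_apply₁₂, Matrix.zero_apply, Matrix.of_apply]
        fin_cases j
        · rw [hnat0 _ rfl, if_pos rfl, Matrix.one_apply_ne (hc0 i), mul_zero]
        · rw [hnat1 _ rfl, if_neg h10, if_pos rfl, Matrix.one_apply_ne (hc1 i), mul_zero]
    | inr i =>
      cases j with
      | inl j =>
        simp [hc0 j, hc1 j]
      | inr j =>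
        simp only [submatrix_apply, finSumFinEquiv_apply_right, fromBlocks_apply₂₂,
          Matrix.of_apply, Matrix.smul_apply, smul_eq_mul]
        fin_cases i <;> fin_cases j
        · rw [hnat0 _ rfl, if_pos rfl, Matrix.one_apply_eq]
          norm_num [Matrix.one_apply]
        · rw [hnat1 _ rfl, hnat0 _ rfl, if_neg h10, if_pos rfl,
            Matrix.one_apply_ne (Ne.symm h10)]
          norm_num [Matrix.one_apply, Fin.ext_iff]
        · rw [hnat0 _ rfl, hnat1 _ rfl, if_pos rfl, Matrix.one_apply_ne h10]
          norm_num [Matrix.one_apply, Fin.ext_iff]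
        · rw [hnat1 _ rfl, if_neg h10, if_pos rfl, Matrix.one_apply_eq]
          norm_num [Matrix.one_apply]
  have hdetAB : (A * B).det =
      (A.submatrix (Fin.castAdd 2) (Fin.castAdd 2)).det * (A.det * A.det) := by
    rw [← det_submatrix_equiv_self finSumFinEquiv, hCblock, det_fromBlocks_zero₁₂, det_smul,
      det_one]
    norm_num
    ring
  calc A.det * (adjugate A (TodaI0 m) (TodaI0 m) * adjugate A (TodaI1 m) (TodaI1 m)
      - adjugate A (TodaI0 m) (TodaI1 m) * adjugate A (TodaI1 m) (TodaI0 m))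
      = A.det * B.det := by rw [hdetB]
    _ = (A * B).det := (det_mul A B).symm
    _ = A.det * (A.det * (A.submatrix (Fin.castAdd 2) (Fin.castAdd 2)).det) := by
        rw [hdetAB]; ring

theorem toda_adj_corner (A : Matrix (Fin (m+2)) (Fin (m+2)) R) :
    adjugate A (TodaI0 m) (TodaI0 m) * adjugate A (TodaI1 m) (TodaI1 m)
      - adjugate A (TodaI0 m) (TodaI1 m) * adjugate A (TodaI1 m) (TodaI0 m)
    = A.det * (A.submatrix (Fin.castAdd 2) (Fin.castAdd 2)).det := by
  let A' := mvPolynomialX (Fin (m+2)) (Fin (m+2)) ℤ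
  have key : adjugate A' (TodaI0 m) (TodaI0 m) * adjugate A' (TodaI1 m) (TodaI1 m)
      - adjugate A' (TodaI0 m) (TodaI1 m) * adjugate A' (TodaI1 m) (TodaI0 m)
      = A'.det * (A'.submatrix (Fin.castAdd 2) (Fin.castAdd 2)).det :=
    mul_left_cancel₀ (det_mvPolynomialX_ne_zero (Fin (m+2)) ℤ) (toda_key1 A')
  have trans := congrArg (MvPolynomial.aeval fun p : Fin (m+2) × Fin (m+2) => A p.1 p.2) key
  set φ : MvPolynomial (Fin (m+2) × Fin (m+2)) ℤ →ₐ[ℤ] R :=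
    MvPolynomial.aeval fun p : Fin (m+2) × Fin (m+2) => A p.1 p.2 with hφ
  have hA : φ.mapMatrix A' = A := mvPolynomialX_mapMatrix_aeval ℤ A
  have hadj : ∀ i j, φ (adjugate A' i j) = adjugate A i j := by
    intro i j
    have h1 := AlgHom.map_adjugate φ A'
    have := congrFun (congrFun h1 i) j
    simpa [hA] using this
  have hdet : φ A'.det = A.det := by
    rw [AlgHom.map_det, hA]
  have hsub : φ (A'.submatrix (Fin.castAdd 2) (Fin.castAdd 2)).det
      = (A.submatrix (Fin.castAdd 2) (Fin.castAdd 2)).det := by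
    rw [AlgHom.map_det]
    congr 1
    rw [AlgHom.mapMatrix_apply, ← Matrix.submatrix_map, ← AlgHom.mapMatrix_apply, hA]
  simp only [map_sub, _root_.map_mul, hadj, hdet, hsub] at trans
  exact trans

theorem toda_desnanot_jacobi (A : Matrix (Fin (m+2)) (Fin (m+2)) R) :
    A.det * (A.submatrix (Fin.castAdd 2) (Fin.castAdd 2)).det
    = (A.submatrix (TodaI0 m).succAbove (TodaI0 m).succAbove).det *
        (A.submatrix (TodaI1 m).succAbove (TodaI1 m).succAbove).det
      - (A.submatrix (TodaI1 m).succAbove (TodaI0 m).succAbove).det *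
        (A.submatrix (TodaI0 m).succAbove (TodaI1 m).succAbove).det := by
  rw [← toda_adj_corner A]
  rw [adjugate_fin_succ_eq_det_submatrix, adjugate_fin_succ_eq_det_submatrix,
    adjugate_fin_succ_eq_det_submatrix, adjugate_fin_succ_eq_det_submatrix]
  have e0 : ((TodaI0 m : Fin (m+2)) : ℕ) = m := rfl
  have e1 : ((TodaI1 m : Fin (m+2)) : ℕ) = m + 1 := rfl
  rw [e0, e1]
  have p1 : ((-1 : R)) ^ (m + m) = (-1) ^ (2 * m) := by ring_nf
  have h2m : ((-1 : R)) ^ (m + m) = 1 := by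
    rw [p1, pow_mul]; norm_num
  have h2m2 : ((-1 : R)) ^ (m + 1 + (m + 1)) = 1 := by
    rw [show m + 1 + (m + 1) = 2 * (m + 1) by ring, pow_mul]; norm_num
  have hodd : ((-1 : R)) ^ (m + 1 + m) = -1 := by
    rw [show m + 1 + m = 2 * m + 1 by ring, pow_succ, pow_mul]; norm_num
  have hodd' : ((-1 : R)) ^ (m + (m + 1)) = -1 := by
    rw [show m + (m + 1) = 2 * m + 1 by ring, pow_succ, pow_mul]; norm_num
  rw [h2m, h2m2, hodd, hodd']
  ring


noncomputable def rr (n : ℕ) (j : Fin (n+1)) : ℕ := ((TodaI0 n).succAbove j : ℕ)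

lemma rr_lt {n : ℕ} {j : Fin (n+1)} (h : (j:ℕ) < n) : rr n j = (j:ℕ) := by
  have : (Fin.castSucc j) < TodaI0 n := by
    simp [Fin.lt_def, TodaI0, h]
  rw [rr, Fin.succAbove_of_castSucc_lt _ _ this]
  simp

lemma rr_ge {n : ℕ} {j : Fin (n+1)} (h : ¬ (j:ℕ) < n) : rr n j = (j:ℕ) + 1 := by
  have : TodaI0 n ≤ Fin.castSucc j := by
    simp [Fin.le_def, TodaI0]; omega
  rw [rr, Fin.succAbove_of_le_castSucc _ _ this]
  simp

lemma rr_last {n : ℕ} : rr n (Fin.last n) = n + 1 := by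
  rw [rr_ge (by simp)]; simp

/-- First-derivative step: `h_n' = I · det A` with the last row shifted. -/
lemma hankel_hasDerivAt (n : ℕ) (ω : ℝ) :
    HasDerivAt (hankel n)
      (Complex.I * (Matrix.of fun j k : Fin (n+1) => mu ω (rr n j + (k:ℕ))).det) ω := by
  have H := toda_hasDerivAt_det (fun j k : Fin (n+1) => fun w => mu w ((j:ℕ)+(k:ℕ)))
      (fun j k => Complex.I * mu ω ((j:ℕ)+(k:ℕ)+1)) ω (fun j k => hasDerivAt_mu _ ω)
  have hsum : (∑ j : Fin (n+1), (Matrix.updateRow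
        (Matrix.of fun j' k : Fin (n+1) => mu ω ((j':ℕ)+(k:ℕ))) j
        (fun k => Complex.I * mu ω ((j:ℕ)+(k:ℕ)+1))).det)
      = Complex.I * (Matrix.of fun j k : Fin (n+1) => mu ω (rr n j + (k:ℕ))).det := by
    rw [Fintype.sum_eq_single (Fin.last n)]
    · have hs : (fun k : Fin (n+1) => Complex.I * mu ω (((Fin.last n):ℕ)+(k:ℕ)+1))
          = Complex.I • (fun k : Fin (n+1) => mu ω (((Fin.last n):ℕ)+(k:ℕ)+1)) := rfl
      rw [hs, Matrix.det_updateRow_smul]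
      congr 1
      congr 1
      ext j k
      rw [Matrix.updateRow_apply]
      split_ifs with hj
      · subst hj
        simp only [Matrix.of_apply]
        congr 1
        rw [rr_last, Fin.val_last]
        omega
      · simp only [Matrix.of_apply]
        congr 1
        rw [rr_lt (Fin.val_lt_last hj)]
    · intro j hj
      have hjn : (j:ℕ) < n := Fin.val_lt_last hj
      have hs : (fun k : Fin (n+1) => Complex.I * mu ω ((j:ℕ)+(k:ℕ)+1))
          = Complex.I • (fun k : Fin (n+1) => mu ω ((j:ℕ)+(k:ℕ)+1)) := rfl
      rw [hs, Matrix.det_updateRow_smul]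
      set js : Fin (n+1) := ⟨(j:ℕ)+1, by omega⟩ with hjs
      have hne : j ≠ js := by
        intro hc
        have := congrArg Fin.val hc
        simp [hjs] at this
      rw [Matrix.det_zero_of_row_eq hne, mul_zero]
      rw [Matrix.updateRow_self, Matrix.updateRow_ne (Ne.symm hne)]
      funext k
      simp only [Matrix.of_apply]
      congr 1
      have hjsv : ((js : Fin (n+1)) : ℕ) = (j:ℕ)+1 := rfl
      omega
  rw [← hsum]
  exact H

/-- Second-derivative step (differentiating columns): derivative of `det A`. -/
lemma hankelA_hasDerivAt (n : ℕ) (ω : ℝ) :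
    HasDerivAt (fun w => (Matrix.of fun j k : Fin (n+1) => mu w (rr n j + (k:ℕ))).det)
      (Complex.I * (Matrix.of fun j k : Fin (n+1) => mu ω (rr n j + rr n k)).det) ω := by
  have hfun : (fun w => (Matrix.of fun j k : Fin (n+1) => mu w (rr n j + (k:ℕ))).det)
      = fun w => (Matrix.of fun j k : Fin (n+1) => mu w (rr n k + (j:ℕ))).det := by
    funext w
    rw [← Matrix.det_transpose]
    congr 1
  rw [hfun]
  have H := toda_hasDerivAt_det (fun j k : Fin (n+1) => fun w => mu w (rr n k + (j:ℕ)))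
      (fun j k => Complex.I * mu ω (rr n k + (j:ℕ)+1)) ω (fun j k => hasDerivAt_mu _ ω)
  have hsum : (∑ j : Fin (n+1), (Matrix.updateRow
        (Matrix.of fun j' k : Fin (n+1) => mu ω (rr n k + (j':ℕ))) j
        (fun k => Complex.I * mu ω (rr n k + (j:ℕ)+1))).det)
      = Complex.I * (Matrix.of fun j k : Fin (n+1) => mu ω (rr n j + rr n k)).det := by
    rw [Fintype.sum_eq_single (Fin.last n)]
    · have hs : (fun k : Fin (n+1) => Complex.I * mu ω (rr n k + ((Fin.last n):ℕ)+1))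
          = Complex.I • (fun k : Fin (n+1) => mu ω (rr n k + ((Fin.last n):ℕ)+1)) := rfl
      rw [hs, Matrix.det_updateRow_smul]
      congr 1
      congr 1
      ext j k
      rw [Matrix.updateRow_apply]
      split_ifs with hj
      · subst hj
        simp only [Matrix.of_apply]
        congr 1
        rw [rr_last, Fin.val_last]
        omega
      · simp only [Matrix.of_apply]
        congr 1
        rw [rr_lt (Fin.val_lt_last hj)]
        omega
    · intro j hj
      have hjn : (j:ℕ) < n := Fin.val_lt_last hj
      have hs : (fun k : Fin (n+1) => Complex.I * mu ω (rr n k + (j:ℕ)+1))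
          = Complex.I • (fun k : Fin (n+1) => mu ω (rr n k + (j:ℕ)+1)) := rfl
      rw [hs, Matrix.det_updateRow_smul]
      set js : Fin (n+1) := ⟨(j:ℕ)+1, by omega⟩ with hjs
      have hne : j ≠ js := by
        intro hc
        have := congrArg Fin.val hc
        simp [hjs] at this
      rw [Matrix.det_zero_of_row_eq hne, mul_zero]
      rw [Matrix.updateRow_self, Matrix.updateRow_ne (Ne.symm hne)]
      funext k
      simp only [Matrix.of_apply]
      congr 1
  rw [← hsum]
  exact H

/-- The Toda-type identity `h_n'' h_n - (h_n')² = -h_{n-1} h_{n+1}`. -/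
theorem stmt16 (n : ℕ) (hn : 1 ≤ n) (ω : ℝ) :
    deriv (deriv (hankel n)) ω * hankel n ω - (deriv (hankel n) ω) ^ 2 =
      -(hankel (n - 1) ω * hankel (n + 1) ω) := by
  obtain ⟨m, rfl⟩ : ∃ m, n = m + 1 := ⟨n - 1, (Nat.succ_pred_eq_of_pos hn).symm⟩
  set n := m + 1 with hnm
  -- first derivative, globally
  have hd1 : deriv (hankel n) = fun w =>
      Complex.I * (Matrix.of fun j k : Fin (n+1) => mu w (rr n j + (k:ℕ))).det :=
    funext fun w => (hankel_hasDerivAt n w).deriv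
  -- second derivative at ω
  have hd2at : HasDerivAt (fun w =>
        Complex.I * (Matrix.of fun j k : Fin (n+1) => mu w (rr n j + (k:ℕ))).det)
      (Complex.I * (Complex.I *
        (Matrix.of fun j k : Fin (n+1) => mu ω (rr n j + rr n k)).det)) ω :=
    (hankelA_hasDerivAt n ω).const_mul Complex.I
  have hd2 : deriv (deriv (hankel n)) ω = Complex.I * (Complex.I *
      (Matrix.of fun j k : Fin (n+1) => mu ω (rr n j + rr n k)).det) := by
    rw [hd1]; exact hd2at.deriv
  -- abbreviations
  set hA : ℂ := (Matrix.of fun j k : Fin (n+1) => mu ω (rr n j + (k:ℕ))).det with hAdef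
  set hD : ℂ := (Matrix.of fun j k : Fin (n+1) => mu ω (rr n j + rr n k)).det with hDdef
  -- Desnanot-Jacobi on the (n+2)×(n+2) Hankel matrix
  set N : Matrix (Fin (n+2)) (Fin (n+2)) ℂ :=
    Matrix.of fun j k : Fin (n+2) => mu ω ((j:ℕ)+(k:ℕ)) with hNdef
  have DJ := toda_desnanot_jacobi N
  -- identify the five determinants
  have id1 : N.det = hankel (n+1) ω := rfl
  have id2 : (N.submatrix (Fin.castAdd 2) (Fin.castAdd 2)).det = hankel (n-1) ω := by
    have : n - 1 = m := by omega
    rw [this]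
    congr 1
  have id3 : (N.submatrix (TodaI1 n).succAbove (TodaI1 n).succAbove).det = hankel n ω := by
    congr 1
    ext j k
    have h1 : TodaI1 n = Fin.last (n+1) := rfl
    simp [hNdef, h1, Fin.succAbove_last]
  have hI0succ : ∀ j : Fin (n+1), (((TodaI0 n).succAbove j : Fin (n+2)) : ℕ) = rr n j := fun j => rfl
  have id4 : (N.submatrix (TodaI0 n).succAbove (TodaI1 n).succAbove).det = hA := by
    rw [hAdef]
    congr 1
    ext j k
    have h1 : TodaI1 n = Fin.last (n+1) := rfl
    simp [hNdef, h1, Fin.succAbove_last, hI0succ]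
  have id5 : (N.submatrix (TodaI1 n).succAbove (TodaI0 n).succAbove).det = hA := by
    rw [hAdef, ← Matrix.det_transpose]
    congr 1
    ext j k
    have h1 : TodaI1 n = Fin.last (n+1) := rfl
    simp [hNdef, h1, Fin.succAbove_last, hI0succ, Matrix.transpose_apply]
    congr 1
    omega
  have id6 : (N.submatrix (TodaI0 n).succAbove (TodaI0 n).succAbove).det = hD := by
    rw [hDdef]
    congr 1
  rw [id1, id2, id3, id4, id5, id6] at DJ
  -- finish
  have hd1' : deriv (hankel n) ω = Complex.I * hA := by rw [hd1]
  rw [hd2, hd1']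
  have hI2 : (Complex.I : ℂ) * Complex.I = -1 := Complex.I_mul_I
  calc Complex.I * (Complex.I * hD) * hankel n ω - (Complex.I * hA) ^ 2
      = -(hD * hankel n ω - hA * hA) := by
        ring_nf
        rw [Complex.I_sq]
        ring
    _ = -(hankel (n-1) ω * hankel (n+1) ω) := by rw [← DJ]; ring
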